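/- Let θ, α be nonconstant inner functions and φ ∈ L^∞(𝕋). Write φ = φ⁻ + φ⁺ with φ⁺ ∈ H², φ⁻ ∈ H²₋, and let D = D_φ^{θ,α}. Then φ⁻ = P⁻(z · D(conj z)) and φ⁺ = J(P⁻(D*(conj z))), where J f = conj(z)·conj(f). In particular, the symbol φ is uniquely recovered from D(conj z) and D*(conj z). -/

import Mathlib

open MeasureTheory Complex ComplexConjugate

noncomputable section

instance : Fact (0 < 2 * Real.pi) := ⟨by positivity⟩

abbrev 𝕋 : Type := AddCircle (2 * Real.pi)

abbrev m : Measure 𝕋 := AddCircle.haarAddCircle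

def e : 𝕋 → ℂ := fun x => fourier 1 x

def Hardy2 : Set (𝕋 → ℂ) :=
  {f | MemLp f 2 m ∧ ∀ n : ℤ, n < 0 → fourierCoeff f n = 0}

def Hardy2neg : Set (𝕋 → ℂ) :=
  {f | MemLp f 2 m ∧ ∀ n : ℤ, 0 ≤ n → fourierCoeff f n = 0}

def thetaH2 (θ : 𝕋 → ℂ) : Set (𝕋 → ℂ) :=
  {g | ∃ h ∈ Hardy2, g =ᵐ[m] fun x => θ x * h x}

def Kmodel (θ : 𝕋 → ℂ) : Set (𝕋 → ℂ) :=
  {f | f ∈ Hardy2 ∧ ∀ g ∈ thetaH2 θ, ∫ x, f x * conj (g x) ∂m = 0}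

def Kperp (θ : 𝕋 → ℂ) : Set (𝕋 → ℂ) :=
  {f | ∃ g ∈ thetaH2 θ, ∃ h ∈ Hardy2neg, f =ᵐ[m] fun x => g x + h x}

def Cfun (θ f : 𝕋 → ℂ) : 𝕋 → ℂ := fun x => θ x * conj (e x) * conj (f x)

def Jfun (f : 𝕋 → ℂ) : 𝕋 → ℂ := fun x => conj (e x) * conj (f x)

def IsInner (θ : 𝕋 → ℂ) : Prop :=
  MemLp θ ⊤ m ∧ (∀ᵐ x ∂m, ‖θ x‖ = 1) ∧ ∀ n : ℤ, n < 0 → fourierCoeff θ n = 0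

def NCInner (θ : 𝕋 → ℂ) : Prop := IsInner θ ∧ ¬∃ c : ℂ, θ =ᵐ[m] fun _ => c

def IsPneg (f g : 𝕋 → ℂ) : Prop :=
  g ∈ Hardy2neg ∧ ∀ n : ℤ, n < 0 → fourierCoeff g n = fourierCoeff f n

def IsPpos (f g : 𝕋 → ℂ) : Prop :=
  g ∈ Hardy2 ∧ ∀ n : ℤ, 0 ≤ n → fourierCoeff g n = fourierCoeff f n

def IsProjOn (S : Set (𝕋 → ℂ)) (f g : 𝕋 → ℂ) : Prop :=
  g ∈ S ∧ ∀ u ∈ S, ∫ x, (f x - g x) * conj (u x) ∂m = 0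

namespace SymbolRecovery

lemma norm_fourier_pt (n : ℤ) (x : 𝕋) : ‖fourier n x‖ = 1 := Circle.norm_coe _

lemma memLp_fourier (p : ENNReal) (n : ℤ) : MemLp (fun x : 𝕋 => fourier n x) p m :=
  (memLp_top_of_bound ((fourier n).continuous.aestronglyMeasurable) 1
    (Filter.Eventually.of_forall fun x => le_of_eq (norm_fourier_pt n x))).mono_exponent
    le_top

lemma fc_congr {f g : 𝕋 → ℂ} (h : f =ᵐ[m] g) (n : ℤ) : fourierCoeff f n = fourierCoeff g n := by
  simp only [fourierCoeff]
  exact integral_congr_ae (h.mono fun x hx => by dsimp only; rw [hx])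

lemma fc_shift (k : ℤ) (f : 𝕋 → ℂ) (n : ℤ) :
    fourierCoeff (fun x => fourier k x * f x) n = fourierCoeff f (n - k) := by
  simp only [fourierCoeff, smul_eq_mul]
  congr 1
  funext x
  rw [← mul_assoc, ← fourier_add]
  have : -n + k = -(n - k) := by ring
  rw [this]

lemma fc_conj (f : 𝕋 → ℂ) (n : ℤ) :
    fourierCoeff (fun x => conj (f x)) n = conj (fourierCoeff f (-n)) := by
  simp only [fourierCoeff, smul_eq_mul, ← integral_conj]
  congr 1
  funext x
  rw [neg_neg, map_mul, ← fourier_neg]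

lemma fc_eq_integral (f : 𝕋 → ℂ) (n : ℤ) :
    fourierCoeff f n = ∫ x, f x * conj (fourier n x) ∂m := by
  simp only [fourierCoeff, smul_eq_mul]
  congr 1
  funext x
  rw [← fourier_neg, mul_comm]

lemma fc_fourier (k n : ℤ) :
    fourierCoeff (fun x : 𝕋 => fourier k x) n = if k = n then 1 else 0 := by
  simp only [fourierCoeff, smul_eq_mul, ← fourier_add]
  split_ifs with h
  · subst h
    simp only [neg_add_cancel]
    simp [fourier_zero]
  · have hkn : -n + k ≠ 0 := fun hc => h (by omega)
    exact integral_eq_zero_of_add_right_eq_neg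
      (fourier_add_half_inv_index hkn Real.two_pi_pos)

lemma fourier_mem_H2neg {n : ℤ} (hn : n < 0) : (fun x : 𝕋 => fourier n x) ∈ Hardy2neg :=
  ⟨memLp_fourier 2 n, fun k hk => by rw [fc_fourier, if_neg (by omega)]⟩

lemma H2neg_subset_Kperp (θ : 𝕋 → ℂ) {f : 𝕋 → ℂ} (hf : f ∈ Hardy2neg) : f ∈ Kperp θ := by
  refine ⟨fun _ => 0, ⟨fun _ => 0, ⟨MemLp.zero', fun n _ => ?_⟩, ?_⟩, f, hf, ?_⟩
  · simp [fourierCoeff]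
  · exact Filter.Eventually.of_forall (by simp)
  · exact Filter.Eventually.of_forall (by simp)

lemma Kperp_mem_L2 {θ f : 𝕋 → ℂ} (hθtop : MemLp θ ⊤ m) (hθ1 : ∀ᵐ x ∂m, ‖θ x‖ = 1)
    (hf : f ∈ Kperp θ) : MemLp f 2 m := by
  obtain ⟨g, ⟨h, hh, hg⟩, k, hk, hfk⟩ := hf
  have hg2 : MemLp g 2 m := by
    refine MemLp.ae_eq hg.symm (MemLp.of_le hh.1
      (hθtop.aestronglyMeasurable.mul hh.1.aestronglyMeasurable) ?_)
    filter_upwards [hθ1] with x hx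
    rw [norm_mul, hx, one_mul]
  exact MemLp.ae_eq hfk.symm (hg2.add hk.1)

lemma integrable_mul_fourier {f : 𝕋 → ℂ} (hf : MemLp f 2 m) (n : ℤ) :
    Integrable (fun x => f x * conj (fourier n x)) m := by
  have hi : Integrable f m := hf.integrable one_le_two
  refine hi.mono (hi.aestronglyMeasurable.mul
    ((continuous_conj.comp (fourier n).continuous).aestronglyMeasurable))
    (Filter.Eventually.of_forall fun x => ?_)
  simp only [norm_mul, Function.comp_apply, RCLike.norm_conj, norm_fourier_pt, mul_one, le_refl]

lemma fc_add {f g : 𝕋 → ℂ} (hf : MemLp f 2 m) (hg : MemLp g 2 m) (n : ℤ) :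
    fourierCoeff (fun x => f x + g x) n = fourierCoeff f n + fourierCoeff g n := by
  rw [fc_eq_integral, fc_eq_integral, fc_eq_integral,
    ← integral_add (integrable_mul_fourier hf n) (integrable_mul_fourier hg n)]
  congr 1
  funext x
  ring

lemma L2_ext {f g : 𝕋 → ℂ} (hf : MemLp f 2 m) (hg : MemLp g 2 m)
    (h : ∀ n : ℤ, fourierCoeff f n = fourierCoeff g n) : f =ᵐ[m] g := by
  have h1 : hf.toLp f = hg.toLp g := by
    apply (fourierBasis (T := 2 * Real.pi)).repr.injective
    apply lp.ext
    funext n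
    rw [fourierBasis_repr, fourierBasis_repr, fc_congr hf.coeFn_toLp n,
      fc_congr hg.coeFn_toLp n, h n]
  exact hf.coeFn_toLp.symm.trans (h1 ▸ hg.coeFn_toLp)

lemma proj_coeff {θ F u : 𝕋 → ℂ} (hF : MemLp F 2 m) (hu2 : MemLp u 2 m)
    (hu : IsProjOn (Kperp θ) F u) {n : ℤ} (hn : n < 0) :
    fourierCoeff u n = fourierCoeff F n := by
  have h0 := hu.2 (fun x => fourier n x) (H2neg_subset_Kperp θ (fourier_mem_H2neg hn))
  have h1 : ∫ x, (F x - u x) * conj (fourier n x) ∂m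
      = fourierCoeff F n - fourierCoeff u n := by
    rw [fc_eq_integral, fc_eq_integral,
      ← integral_sub (integrable_mul_fourier hF n) (integrable_mul_fourier hu2 n)]
    congr 1
    funext x
    ring
  have := h1.symm.trans h0
  linear_combination -this

end SymbolRecovery


open SymbolRecovery

/-- Symbol recovery: φ⁻ = P⁻(z·D(conj z)) and φ⁺ = J(P⁻(D*(conj z))). -/
theorem stmt13 (θ α φ : 𝕋 → ℂ) (hθ : NCInner θ) (hα : NCInner α) (hφ : MemLp φ ⊤ m)
    (φp φm : 𝕋 → ℂ) (hφp : φp ∈ Hardy2) (hφm : φm ∈ Hardy2neg)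
    (hdec : φ =ᵐ[m] fun x => φm x + φp x)
    (u v : 𝕋 → ℂ)
    (hu : IsProjOn (Kperp α) (fun x => φ x * conj (e x)) u)
    (hv : IsProjOn (Kperp θ) (fun x => conj (φ x) * conj (e x)) v) :
    (∀ w : 𝕋 → ℂ, IsPneg (fun x => e x * u x) w → φm =ᵐ[m] w) ∧
    (∀ w : 𝕋 → ℂ, IsPneg v w → φp =ᵐ[m] Jfun w) := by
  classical
  have hφ2 : MemLp φ 2 m := hφ.mono_exponent le_top
  set F : 𝕋 → ℂ := fun x => φ x * conj (e x) with hFdef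
  have hFeq : F = fun x => fourier (-1 : ℤ) x * φ x := by
    funext x
    simp only [hFdef, e, fourier_neg, mul_comm]
  have hF2 : MemLp F 2 m := by
    rw [hFeq]
    refine MemLp.of_le hφ2 (((fourier (-1 : ℤ)).continuous.aestronglyMeasurable).mul
      hφ2.aestronglyMeasurable) (Filter.Eventually.of_forall fun x => ?_)
    rw [norm_mul, norm_fourier_pt, one_mul]
  have hu2 : MemLp u 2 m := Kperp_mem_L2 hα.1.1 hα.1.2.1 hu.1
  have hFc : ∀ n : ℤ, fourierCoeff F n = fourierCoeff φ (n + 1) := fun n => by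
    rw [hFeq, fc_shift, show n - -1 = n + 1 from by ring]
  have hφc : ∀ n : ℤ, n < 0 → fourierCoeff φ n = fourierCoeff φm n := fun n hn => by
    rw [fc_congr hdec n, fc_add hφm.1 hφp.1, hφp.2 n hn, add_zero]
  set G : 𝕋 → ℂ := fun x => conj (φ x) * conj (e x) with hGdef
  have hGeq : G = fun x => fourier (-1 : ℤ) x * conj (φ x) := by
    funext x
    simp only [hGdef, e, fourier_neg, mul_comm]
  have hφconj2 : MemLp (fun x => conj (φ x)) 2 m := by
    refine MemLp.of_le hφ2 ?_
      (Filter.Eventually.of_forall fun x => by rw [RCLike.norm_conj])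
    exact continuous_conj.comp_aestronglyMeasurable hφ2.aestronglyMeasurable
  have hG2 : MemLp G 2 m := by
    rw [hGeq]
    refine MemLp.of_le hφconj2 (((fourier (-1 : ℤ)).continuous.aestronglyMeasurable).mul
      hφconj2.aestronglyMeasurable) (Filter.Eventually.of_forall fun x => ?_)
    rw [norm_mul, norm_fourier_pt, one_mul]
  have hv2 : MemLp v 2 m := Kperp_mem_L2 hθ.1.1 hθ.1.2.1 hv.1
  have hGc : ∀ n : ℤ, fourierCoeff G n = conj (fourierCoeff φ (-(n + 1))) := fun n => by
    rw [hGeq, fc_shift, show n - -1 = n + 1 from by ring, fc_conj]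
  constructor
  · intro w hw
    refine L2_ext hφm.1 hw.1.1 fun n => ?_
    rcases lt_or_ge n 0 with hn | hn
    · calc fourierCoeff φm n = fourierCoeff φ n := (hφc n hn).symm
        _ = fourierCoeff F (n - 1) := by
            rw [hFc, show n - 1 + 1 = n from by ring]
        _ = fourierCoeff u (n - 1) := (proj_coeff hF2 hu2 hu (by omega)).symm
        _ = fourierCoeff (fun x => e x * u x) n := by
            rw [show (fun x => e x * u x) = fun x => fourier (1 : ℤ) x * u x from rfl, fc_shift]
        _ = fourierCoeff w n := (hw.2 n hn).symm
    · rw [hφm.2 n hn, hw.1.2 n hn]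
  · intro w hw
    have hJ : Jfun w = fun x => fourier (-1 : ℤ) x * conj (w x) := by
      funext x
      simp only [Jfun, e, fourier_neg, mul_comm]
    have hwc : MemLp (fun x => conj (w x)) 2 m := by
      refine MemLp.of_le hw.1.1 ?_
        (Filter.Eventually.of_forall fun x => by rw [RCLike.norm_conj])
      exact continuous_conj.comp_aestronglyMeasurable hw.1.1.aestronglyMeasurable
    have hJ2 : MemLp (Jfun w) 2 m := by
      rw [hJ]
      refine MemLp.of_le hwc (((fourier (-1 : ℤ)).continuous.aestronglyMeasurable).mul
        hwc.aestronglyMeasurable) (Filter.Eventually.of_forall fun x => ?_)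
      rw [norm_mul, norm_fourier_pt, one_mul]
    have hJc : ∀ k : ℤ, fourierCoeff (Jfun w) k = conj (fourierCoeff w (-(k + 1))) := fun k => by
      rw [hJ, fc_shift, show k - -1 = k + 1 from by ring, fc_conj]
    refine L2_ext hφp.1 hJ2 fun n => ?_
    rcases lt_or_ge n 0 with hn | hn
    · rw [hφp.2 n hn, hJc n, hw.1.2 (-(n + 1)) (by omega), map_zero]
    · have h1 : fourierCoeff φp n = fourierCoeff φ n := by
        rw [fc_congr hdec n, fc_add hφm.1 hφp.1, hφm.2 n hn, zero_add]
      calc fourierCoeff φp n = fourierCoeff φ n := h1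
        _ = conj (conj (fourierCoeff φ n)) := (Complex.conj_conj _).symm
        _ = conj (fourierCoeff G (-(n + 1))) := by
            rw [hGc, show -(-(n + 1) + 1) = n from by ring]
        _ = conj (fourierCoeff v (-(n + 1))) := by
            rw [proj_coeff hG2 hv2 hv (show (-(n + 1) : ℤ) < 0 by omega)]
        _ = conj (fourierCoeff w (-(n + 1))) := by rw [hw.2 (-(n + 1)) (by omega)]
        _ = fourierCoeff (Jfun w) n := (hJc n).symm
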